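/- arXiv:1209.0544 — 4 statements merged into one kernel-verified Lean document; each statement's English description precedes it below -/
import Mathlib

section
/- Let n ≥ 3 and let f : ℝⁿ → ℝ be a continuous nonnegative function such that the limit A₀ = lim_{R→∞} (1/log R) ∫₁^R ρ^{1-n} (∫_{B_ρ(0)} f dx) dρ exists and is finite. Then for every x₀ ∈ ℝⁿ, lim_{R→∞} (1/log R) ∫₁^R ρ^{1-n} (∫_{B_ρ(x₀)} f dx) dρ = A₀. -/
open MeasureTheory Metric Filter Real
set_option maxHeartbeats 1000000

lemma aux_integrableOn {φ : ℝ → ℝ} (hm : Measurable φ) {a b C : ℝ}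
    (hC : ∀ ρ ∈ Set.Ioc a b, |φ ρ| ≤ C) : IntegrableOn φ (Set.Ioc a b) := by
  apply Measure.integrableOn_of_bounded measure_Ioc_lt_top.ne hm.aestronglyMeasurable
  filter_upwards [ae_restrict_mem measurableSet_Ioc] with ρ hρ using hC ρ hρ

lemma aux_log_ratio (d : ℝ) : Tendsto (fun R => Real.log (R + d) / Real.log R) atTop (nhds 1) := by
  have h1 : Tendsto (fun R : ℝ => (R + d) / R) atTop (nhds 1) := by
    have : Tendsto (fun R : ℝ => 1 + d / R) atTop (nhds (1 + 0)) :=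
      (tendsto_const_nhds).add (tendsto_const_nhds.div_atTop tendsto_id)
    rw [add_zero] at this
    apply this.congr'
    filter_upwards [eventually_gt_atTop 0] with R hR
    field_simp
  have h2 : Tendsto (fun R : ℝ => Real.log (R + d) - Real.log R) atTop (nhds 0) := by
    have hc : Tendsto (fun R : ℝ => Real.log ((R + d) / R)) atTop (nhds 0) := by
      have := (Real.continuousAt_log (by norm_num : (1:ℝ) ≠ 0)).tendsto.comp h1
      simpa [Function.comp_def] using this
    apply hc.congr'
    filter_upwards [eventually_gt_atTop (max 0 (-d))] with R hR
    have h0 : (0:ℝ) < R := lt_of_le_of_lt (le_max_left _ _) hR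
    have hd : (0:ℝ) < R + d := by
      have := lt_of_le_of_lt (le_max_right _ _) hR; linarith
    rw [Real.log_div hd.ne' h0.ne']
  have h3 : Tendsto (fun R : ℝ => 1 + (Real.log (R + d) - Real.log R) / Real.log R)
      atTop (nhds 1) := by
    have := (tendsto_const_nhds (x := (1:ℝ))).add (h2.div_atTop Real.tendsto_log_atTop)
    simpa using this
  apply h3.congr'
  filter_upwards [eventually_gt_atTop 1] with R hR
  have hlog : Real.log R ≠ 0 := (Real.log_pos hR).ne'
  field_simp
  ring


theorem stmt_0 (n : ℕ) (hn : 3 ≤ n)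
    (f : EuclideanSpace ℝ (Fin n) → ℝ) (hf : Continuous f) (hf0 : ∀ x, 0 ≤ f x)
    (A₀ : ℝ)
    (hA : Tendsto (fun R : ℝ => (Real.log R)⁻¹ *
        ∫ ρ in Set.Ioc (1:ℝ) R, (ρ ^ (n-1))⁻¹ * ∫ x in ball (0 : EuclideanSpace ℝ (Fin n)) ρ, f x)
      atTop (nhds A₀)) :
    ∀ x₀ : EuclideanSpace ℝ (Fin n),
      Tendsto (fun R : ℝ => (Real.log R)⁻¹ *
          ∫ ρ in Set.Ioc (1:ℝ) R, (ρ ^ (n-1))⁻¹ * ∫ x in ball x₀ ρ, f x)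
        atTop (nhds A₀) := by
  intro x₀
  set k := n - 1 with hk
  set d := ‖x₀‖ with hdd
  have hd0 : 0 ≤ d := norm_nonneg _
  set F : EuclideanSpace ℝ (Fin n) → ℝ → ℝ := fun c ρ => ∫ x in ball c ρ, f x with hF
  set g : EuclideanSpace ℝ (Fin n) → ℝ → ℝ := fun c ρ => (ρ ^ k)⁻¹ * F c ρ with hg
  -- basic facts
  have hfint : ∀ (c : EuclideanSpace ℝ (Fin n)) (ρ : ℝ), IntegrableOn f (ball c ρ) := fun c ρ =>
    ((hf.continuousOn).integrableOn_compact (isCompact_closedBall c ρ)).mono_set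
      ball_subset_closedBall
  have Fnn : ∀ (c : EuclideanSpace ℝ (Fin n)) (ρ : ℝ), 0 ≤ F c ρ := fun c ρ =>
    setIntegral_nonneg measurableSet_ball (fun x _ => hf0 x)
  have fae : ∀ (c : EuclideanSpace ℝ (Fin n)) (ρ : ℝ), 0 ≤ᵐ[volume.restrict (ball c ρ)] f := fun c ρ =>
    Filter.Eventually.of_forall hf0
  have Fmono : ∀ c : EuclideanSpace ℝ (Fin n), Monotone (F c) := by
    intro c ρ₁ ρ₂ h
    exact setIntegral_mono_set (hfint c ρ₂) (fae c ρ₂) ((ball_subset_ball h).eventuallyLE)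
  have Fmeas : ∀ c : EuclideanSpace ℝ (Fin n), Measurable (F c) := fun c => (Fmono c).measurable
  have gmeas : ∀ c : EuclideanSpace ℝ (Fin n), Measurable (g c) := fun c =>
    ((measurable_id.pow_const k).inv).mul (Fmeas c)
  have gnn : ∀ (c : EuclideanSpace ℝ (Fin n)) (ρ : ℝ), 0 < ρ → 0 ≤ g c ρ := fun c ρ hρ =>
    mul_nonneg (by positivity) (Fnn c ρ)
  have gint : ∀ (c : EuclideanSpace ℝ (Fin n)) {a b : ℝ}, 0 < a → IntegrableOn (g c) (Set.Ioc a b) := by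
    intro c a b ha
    apply aux_integrableOn (gmeas c) (C := (a ^ k)⁻¹ * F c b)
    intro ρ hρ
    have hρ0 : 0 < ρ := ha.trans hρ.1
    rw [abs_of_nonneg (gnn c ρ hρ0)]
    apply mul_le_mul
    · exact inv_anti₀ (by positivity) (pow_le_pow_left₀ ha.le hρ.1.le k)
    · exact Fmono c hρ.2
    · exact Fnn c ρ
    · positivity
  have gshiftint : ∀ (c : EuclideanSpace ℝ (Fin n)) (e : ℝ) {a b : ℝ}, 0 < a + e →
      IntegrableOn (fun ρ => g c (ρ + e)) (Set.Ioc a b) := by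
    intro c e a b ha
    apply aux_integrableOn (φ := fun ρ => g c (ρ + e))
      ((gmeas c).comp (measurable_add_const e)) (C := ((a + e) ^ k)⁻¹ * F c (b + e))
    intro ρ hρ
    have h1 : 0 < ρ + e := by have := hρ.1; linarith
    rw [abs_of_nonneg (gnn c (ρ + e) h1)]
    apply mul_le_mul
    · exact inv_anti₀ (by positivity)
        (pow_le_pow_left₀ ha.le (by have := hρ.1; linarith) k)
    · exact Fmono c (by have := hρ.2; linarith)
    · exact Fnn c _
    · positivity
  -- change of variables
  have cov : ∀ (c : EuclideanSpace ℝ (Fin n)) (e a b : ℝ), a ≤ b →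
      (∫ ρ in Set.Ioc a b, g c (ρ + e)) = ∫ σ in Set.Ioc (a + e) (b + e), g c σ := by
    intro c e a b hab
    rw [← intervalIntegral.integral_of_le hab,
      ← intervalIntegral.integral_of_le (by linarith : a + e ≤ b + e),
      intervalIntegral.integral_comp_add_right]
  -- splitting
  have split : ∀ (c : EuclideanSpace ℝ (Fin n)) {a m b : ℝ}, 0 < a → a ≤ m → m ≤ b →
      (∫ ρ in Set.Ioc a b, g c ρ) =
        (∫ ρ in Set.Ioc a m, g c ρ) + ∫ ρ in Set.Ioc m b, g c ρ := by
    intro c a m b ha ham hmb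
    rw [← Set.Ioc_union_Ioc_eq_Ioc ham hmb]
    exact setIntegral_union (Set.Ioc_disjoint_Ioc_of_le le_rfl) measurableSet_Ioc
      (gint c ha) (gint c (ha.trans_le ham))
  -- restate hypothesis and goal in terms of g
  have hA' : Tendsto (fun R : ℝ => (Real.log R)⁻¹ * ∫ ρ in Set.Ioc (1:ℝ) R, g 0 ρ)
      atTop (nhds A₀) := hA
  have Inn : ∀ (c : EuclideanSpace ℝ (Fin n)) (b : ℝ), 0 ≤ ∫ ρ in Set.Ioc (1:ℝ) b, g c ρ := by
    intro c b
    apply setIntegral_nonneg measurableSet_Ioc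
    intro ρ hρ
    exact gnn c ρ (by linarith [hρ.1])
  have hA0 : 0 ≤ A₀ := by
    apply ge_of_tendsto hA'
    filter_upwards [eventually_gt_atTop (1:ℝ)] with R hR
    exact mul_nonneg (inv_nonneg.2 (Real.log_nonneg hR.le)) (Inn 0 R)
  show Tendsto (fun R : ℝ => (Real.log R)⁻¹ * ∫ ρ in Set.Ioc (1:ℝ) R, g x₀ ρ) atTop (nhds A₀)
  rw [Metric.tendsto_nhds]
  intro ε hε
  have hC1 : Tendsto (fun M : ℝ => (1 + d / M) ^ k * A₀) atTop (nhds A₀) := by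
    have h0 : Tendsto (fun M : ℝ => 1 + d / M) atTop (nhds 1) := by
      have := (tendsto_const_nhds (x := (1:ℝ))).add
        ((tendsto_const_nhds (x := d)).div_atTop tendsto_id)
      simpa using this
    have := (h0.pow k).mul_const A₀
    simpa using this
  have hC2 : Tendsto (fun M : ℝ => (1 - d / M) ^ k * A₀) atTop (nhds A₀) := by
    have h0 : Tendsto (fun M : ℝ => 1 - d / M) atTop (nhds 1) := by
      have := (tendsto_const_nhds (x := (1:ℝ))).sub
        ((tendsto_const_nhds (x := d)).div_atTop tendsto_id)
      simpa using this
    have := (h0.pow k).mul_const A₀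
    simpa using this
  obtain ⟨M, hM1, hM2, hM3⟩ : ∃ M : ℝ, 1 + d < M ∧ (1 + d / M) ^ k * A₀ < A₀ + ε / 2 ∧
      A₀ - ε / 2 < (1 - d / M) ^ k * A₀ := by
    have e1 := eventually_gt_atTop (1 + d)
    have e2 := hC1.eventually_lt_const (by linarith : A₀ < A₀ + ε / 2)
    have e3 := hC2.eventually_const_lt (by linarith : A₀ - ε / 2 < A₀)
    exact ((e1.and (e2.and e3)).exists).imp (fun M h => ⟨h.1, h.2.1, h.2.2⟩)
  have hM0 : 0 < M := by linarith
  have hM1' : 1 < M := by linarith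
  have hdM : d / M < 1 := by rw [div_lt_one hM0]; linarith
  have hdM0 : 0 ≤ d / M := div_nonneg hd0 hM0.le
  set C : ℝ := (1 + d / M) ^ k with hCdef
  set c : ℝ := (1 - d / M) ^ k with hcdef
  have hCpos : 0 < C := by positivity
  have hcpos : 0 < c := by
    have h1 : 0 < 1 - d / M := by linarith
    positivity
  -- pointwise bounds
  have hdd' : d ≤ d / M * M := by rw [div_mul_cancel₀ _ hM0.ne']
  have ptUB : ∀ ρ, M ≤ ρ → g x₀ ρ ≤ C * g 0 (ρ + d) := by
    intro ρ hρ
    have hρ0 : 0 < ρ := hM0.trans_le hρ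
    have hFle : F x₀ ρ ≤ F 0 (ρ + d) := by
      apply setIntegral_mono_set (hfint 0 (ρ + d)) (fae 0 (ρ + d))
      apply HasSubset.Subset.eventuallyLE
      intro x hx
      rw [mem_ball] at *
      calc dist x 0 ≤ dist x x₀ + dist x₀ 0 := dist_triangle _ _ _
        _ < ρ + d := by rw [dist_zero_right]; exact add_lt_add_of_lt_of_le hx le_rfl
    have hdle : d ≤ d / M * ρ := hdd'.trans (mul_le_mul_of_nonneg_left hρ hdM0)
    have key : (ρ + d) ^ k ≤ C * ρ ^ k := by
      rw [hCdef, ← mul_pow]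
      exact pow_le_pow_left₀ (by linarith) (by nlinarith) k
    have hinv : (ρ ^ k)⁻¹ ≤ C * ((ρ + d) ^ k)⁻¹ := by
      have h2 : (C * ρ ^ k)⁻¹ ≤ ((ρ + d) ^ k)⁻¹ := inv_anti₀ (by positivity) key
      have h3 := mul_le_mul_of_nonneg_left h2 hCpos.le
      calc (ρ ^ k)⁻¹ = C * (C * ρ ^ k)⁻¹ := by
            rw [mul_inv, ← mul_assoc, mul_inv_cancel₀ hCpos.ne', one_mul]
        _ ≤ C * ((ρ + d) ^ k)⁻¹ := h3
    show (ρ ^ k)⁻¹ * F x₀ ρ ≤ C * (((ρ + d) ^ k)⁻¹ * F 0 (ρ + d))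
    calc (ρ ^ k)⁻¹ * F x₀ ρ ≤ (ρ ^ k)⁻¹ * F 0 (ρ + d) :=
          mul_le_mul_of_nonneg_left hFle (by positivity)
      _ ≤ (C * ((ρ + d) ^ k)⁻¹) * F 0 (ρ + d) :=
          mul_le_mul_of_nonneg_right hinv (Fnn _ _)
      _ = C * (((ρ + d) ^ k)⁻¹ * F 0 (ρ + d)) := by ring
  have ptLB : ∀ ρ, M ≤ ρ → c * g 0 (ρ - d) ≤ g x₀ ρ := by
    intro ρ hρ
    have hρ0 : 0 < ρ := hM0.trans_le hρ
    have hρd : 1 < ρ - d := by linarith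
    have hFge : F 0 (ρ - d) ≤ F x₀ ρ := by
      apply setIntegral_mono_set (hfint x₀ ρ) (fae x₀ ρ)
      apply HasSubset.Subset.eventuallyLE
      intro x hx
      rw [mem_ball] at *
      calc dist x x₀ ≤ dist x 0 + dist 0 x₀ := dist_triangle _ _ _
        _ < (ρ - d) + d := by
            rw [dist_zero_left]
            exact add_lt_add_of_lt_of_le hx le_rfl
        _ = ρ := by ring
    have hdle : d ≤ d / M * ρ := hdd'.trans (mul_le_mul_of_nonneg_left hρ hdM0)
    have key : c * ρ ^ k ≤ (ρ - d) ^ k := by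
      rw [hcdef, ← mul_pow]
      exact pow_le_pow_left₀ (by nlinarith) (by nlinarith) k
    have hinv : c * ((ρ - d) ^ k)⁻¹ ≤ (ρ ^ k)⁻¹ := by
      have h2 : ((ρ - d) ^ k)⁻¹ ≤ (c * ρ ^ k)⁻¹ := inv_anti₀ (by positivity) key
      have h3 := mul_le_mul_of_nonneg_left h2 hcpos.le
      calc c * ((ρ - d) ^ k)⁻¹ ≤ c * (c * ρ ^ k)⁻¹ := h3
        _ = (ρ ^ k)⁻¹ := by
            rw [mul_inv, ← mul_assoc, mul_inv_cancel₀ hcpos.ne', one_mul]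
    show c * (((ρ - d) ^ k)⁻¹ * F 0 (ρ - d)) ≤ (ρ ^ k)⁻¹ * F x₀ ρ
    calc c * (((ρ - d) ^ k)⁻¹ * F 0 (ρ - d)) = (c * ((ρ - d) ^ k)⁻¹) * F 0 (ρ - d) := by ring
      _ ≤ (ρ ^ k)⁻¹ * F 0 (ρ - d) := mul_le_mul_of_nonneg_right hinv (Fnn _ _)
      _ ≤ (ρ ^ k)⁻¹ * F x₀ ρ := mul_le_mul_of_nonneg_left hFge (by positivity)
  -- integral bounds
  have IUB : ∀ R, M ≤ R → (∫ ρ in Set.Ioc (1:ℝ) R, g x₀ ρ) ≤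
      (∫ ρ in Set.Ioc (1:ℝ) M, g x₀ ρ) + C * ∫ ρ in Set.Ioc (1:ℝ) (R + d), g 0 ρ := by
    intro R hR
    have hsplit := split x₀ one_pos hM1'.le hR
    have step1 : (∫ ρ in Set.Ioc M R, g x₀ ρ) ≤ ∫ ρ in Set.Ioc M R, C * g 0 (ρ + d) := by
      apply setIntegral_mono_on (gint x₀ hM0)
        ((gshiftint 0 d (a := M) (by linarith)).const_mul C) measurableSet_Ioc
      intro ρ hρ
      exact ptUB ρ hρ.1.le
    have step2 : (∫ ρ in Set.Ioc M R, C * g 0 (ρ + d)) =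
        C * ∫ σ in Set.Ioc (M + d) (R + d), g 0 σ := by
      rw [MeasureTheory.integral_const_mul, cov 0 d M R hR]
    have step3 : (∫ σ in Set.Ioc (M + d) (R + d), g 0 σ) ≤ ∫ ρ in Set.Ioc (1:ℝ) (R + d), g 0 ρ := by
      apply setIntegral_mono_set (gint 0 one_pos)
      · filter_upwards [ae_restrict_mem measurableSet_Ioc] with ρ hρ
        exact gnn 0 ρ (by linarith [hρ.1])
      · exact HasSubset.Subset.eventuallyLE (Set.Ioc_subset_Ioc_left (by linarith))
    have := step1.trans (step2.le.trans (mul_le_mul_of_nonneg_left step3 hCpos.le))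
    linarith [hsplit]
  have ILB : ∀ R, M ≤ R → c * (∫ ρ in Set.Ioc (1:ℝ) (R - d), g 0 ρ) -
      c * (∫ ρ in Set.Ioc (1:ℝ) (M - d), g 0 ρ) ≤ ∫ ρ in Set.Ioc (1:ℝ) R, g x₀ ρ := by
    intro R hR
    have hsplit := split x₀ one_pos hM1'.le hR
    have step1 : (∫ ρ in Set.Ioc M R, c * g 0 (ρ + -d)) ≤ ∫ ρ in Set.Ioc M R, g x₀ ρ := by
      apply setIntegral_mono_on
        ((gshiftint 0 (-d) (a := M) (by linarith)).const_mul c) (gint x₀ hM0) measurableSet_Ioc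
      intro ρ hρ
      have := ptLB ρ hρ.1.le
      simpa [sub_eq_add_neg] using this
    have step2 : (∫ ρ in Set.Ioc M R, c * g 0 (ρ + -d)) =
        c * ∫ σ in Set.Ioc (M - d) (R - d), g 0 σ := by
      rw [MeasureTheory.integral_const_mul, cov 0 (-d) M R hR]
      norm_num [sub_eq_add_neg]
    have hsplit2 := split 0 one_pos (by linarith : (1:ℝ) ≤ M - d) (by linarith : M - d ≤ R - d)
    have hIM : 0 ≤ ∫ ρ in Set.Ioc (1:ℝ) M, g x₀ ρ := Inn x₀ M
    have e1 : c * (∫ ρ in Set.Ioc (1:ℝ) (R - d), g 0 ρ) -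
        c * (∫ ρ in Set.Ioc (1:ℝ) (M - d), g 0 ρ) =
        c * ∫ σ in Set.Ioc (M - d) (R - d), g 0 σ := by rw [hsplit2]; ring
    linarith [step1, step2, hsplit, hIM, e1]
  -- limits of the bounding functions
  have hlogin : Tendsto (fun R : ℝ => (Real.log R)⁻¹) atTop (nhds 0) :=
    Real.tendsto_log_atTop.inv_tendsto_atTop
  set K₁ : ℝ := ∫ ρ in Set.Ioc (1:ℝ) M, g x₀ ρ with hK₁
  set K₂ : ℝ := ∫ ρ in Set.Ioc (1:ℝ) (M - d), g 0 ρ with hK₂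
  have hUlim : Tendsto (fun R : ℝ => K₁ * (Real.log R)⁻¹ +
      C * ((Real.log (R + d) / Real.log R) *
        ((Real.log (R + d))⁻¹ * ∫ ρ in Set.Ioc (1:ℝ) (R + d), g 0 ρ)))
      atTop (nhds (C * A₀)) := by
    have p1 : Tendsto (fun R : ℝ => K₁ * (Real.log R)⁻¹) atTop (nhds 0) := by
      simpa using hlogin.const_mul K₁
    have comp : Tendsto (fun R : ℝ =>
        (Real.log (R + d))⁻¹ * ∫ ρ in Set.Ioc (1:ℝ) (R + d), g 0 ρ) atTop (nhds A₀) :=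
      hA'.comp (tendsto_atTop_add_const_right atTop d tendsto_id)
    have p2 := ((aux_log_ratio d).mul comp).const_mul C
    have hsum := p1.add p2
    rw [zero_add, one_mul] at hsum
    exact hsum
  have hLlim : Tendsto (fun R : ℝ =>
      c * ((Real.log (R - d) / Real.log R) *
        ((Real.log (R - d))⁻¹ * ∫ ρ in Set.Ioc (1:ℝ) (R - d), g 0 ρ)) -
      c * K₂ * (Real.log R)⁻¹) atTop (nhds (c * A₀)) := by
    have ratio : Tendsto (fun R : ℝ => Real.log (R - d) / Real.log R) atTop (nhds 1) := by
      have := aux_log_ratio (-d)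
      simpa [sub_eq_add_neg] using this
    have comp : Tendsto (fun R : ℝ =>
        (Real.log (R - d))⁻¹ * ∫ ρ in Set.Ioc (1:ℝ) (R - d), g 0 ρ) atTop (nhds A₀) := by
      have := hA'.comp (tendsto_atTop_add_const_right atTop (-d) tendsto_id)
      simpa [sub_eq_add_neg, Function.comp_def] using this
    have p1 := (ratio.mul comp).const_mul c
    have p2 : Tendsto (fun R : ℝ => c * K₂ * (Real.log R)⁻¹) atTop (nhds 0) := by
      simpa using hlogin.const_mul (c * K₂)
    have hsum := p1.sub p2
    rw [sub_zero, one_mul] at hsum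
    exact hsum
  have evU := hUlim.eventually_lt_const (show C * A₀ < A₀ + ε by linarith)
  have evL := hLlim.eventually_const_lt (show A₀ - ε < c * A₀ by linarith)
  filter_upwards [evU, evL, eventually_ge_atTop M, eventually_gt_atTop (1:ℝ)]
    with R hU hL hRM hR1
  have hlog : 0 < Real.log R := Real.log_pos hR1
  have hlogd : 0 < Real.log (R + d) := Real.log_pos (by linarith)
  have hlogmd : 0 < Real.log (R - d) := Real.log_pos (by linarith)
  have hub : (Real.log R)⁻¹ * (∫ ρ in Set.Ioc (1:ℝ) R, g x₀ ρ) ≤ K₁ * (Real.log R)⁻¹ +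
      C * ((Real.log (R + d) / Real.log R) *
        ((Real.log (R + d))⁻¹ * ∫ ρ in Set.Ioc (1:ℝ) (R + d), g 0 ρ)) := by
    have h1 := mul_le_mul_of_nonneg_left (IUB R hRM) (inv_nonneg.2 hlog.le)
    calc (Real.log R)⁻¹ * (∫ ρ in Set.Ioc (1:ℝ) R, g x₀ ρ)
        ≤ (Real.log R)⁻¹ * (K₁ + C * ∫ ρ in Set.Ioc (1:ℝ) (R + d), g 0 ρ) := h1
      _ = K₁ * (Real.log R)⁻¹ + C * ((Real.log (R + d) / Real.log R) *
          ((Real.log (R + d))⁻¹ * ∫ ρ in Set.Ioc (1:ℝ) (R + d), g 0 ρ)) := by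
        field_simp
  have hlb : c * ((Real.log (R - d) / Real.log R) *
        ((Real.log (R - d))⁻¹ * ∫ ρ in Set.Ioc (1:ℝ) (R - d), g 0 ρ)) -
      c * K₂ * (Real.log R)⁻¹ ≤ (Real.log R)⁻¹ * ∫ ρ in Set.Ioc (1:ℝ) R, g x₀ ρ := by
    have h1 := mul_le_mul_of_nonneg_left (ILB R hRM) (inv_nonneg.2 hlog.le)
    calc c * ((Real.log (R - d) / Real.log R) *
          ((Real.log (R - d))⁻¹ * ∫ ρ in Set.Ioc (1:ℝ) (R - d), g 0 ρ)) -
          c * K₂ * (Real.log R)⁻¹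
        = (Real.log R)⁻¹ * (c * (∫ ρ in Set.Ioc (1:ℝ) (R - d), g 0 ρ) - c * K₂) := by
          field_simp
      _ ≤ (Real.log R)⁻¹ * ∫ ρ in Set.Ioc (1:ℝ) R, g x₀ ρ := h1
  rw [Real.dist_eq, abs_lt]
  constructor <;> linarith
end

section
/- Let n ≥ 3 and let f : ℝⁿ → ℝ be continuous and nonnegative. If there is A₀ ∈ (0,∞) with lim_{R→∞} (1/log R) ∫₁^R ρ^{1-n} (∫_{B_ρ(0)} f dx) dρ = A₀, then there exists R₁ > 1 such that ∫_{B_ρ(0)} f dx ≥ ((n-2)/2) A₀ log ρ for all ρ ≥ R₁; in particular ∫_{B_ρ(0)} f dx → ∞ as ρ → ∞. -/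
open MeasureTheory Metric Filter Real

theorem stmt_1 (n : ℕ) (hn : 3 ≤ n)
    (f : EuclideanSpace ℝ (Fin n) → ℝ) (hf : Continuous f) (hf0 : ∀ x, 0 ≤ f x)
    (A₀ : ℝ) (hA₀ : 0 < A₀)
    (hA : Tendsto (fun R : ℝ => (Real.log R)⁻¹ *
        ∫ ρ in Set.Ioc (1:ℝ) R, (ρ ^ (n-1))⁻¹ * ∫ x in ball (0 : EuclideanSpace ℝ (Fin n)) ρ, f x)
      atTop (nhds A₀)) :
    (∃ R₁ : ℝ, 1 < R₁ ∧ ∀ ρ ≥ R₁,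
        ((n:ℝ) - 2) / 2 * A₀ * Real.log ρ ≤ ∫ x in ball (0 : EuclideanSpace ℝ (Fin n)) ρ, f x) ∧
      Tendsto (fun ρ : ℝ => ∫ x in ball (0 : EuclideanSpace ℝ (Fin n)) ρ, f x) atTop atTop := by
  have hn2 : (0:ℝ) < (n:ℝ) - 2 := by
    have : (3:ℝ) ≤ (n:ℝ) := by exact_mod_cast hn
    linarith
  set I : ℝ → ℝ := fun ρ => ∫ x in ball (0 : EuclideanSpace ℝ (Fin n)) ρ, f x with hIdef
  have hInt : ∀ ρ : ℝ, IntegrableOn f (ball (0 : EuclideanSpace ℝ (Fin n)) ρ) := fun ρ =>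
    (hf.continuousOn.integrableOn_compact (isCompact_closedBall _ _)).mono_set
      ball_subset_closedBall
  have hI_nonneg : ∀ ρ, 0 ≤ I ρ := fun ρ =>
    setIntegral_nonneg measurableSet_ball fun x _ => hf0 x
  have hI_mono : Monotone I := by
    intro a b hab
    exact setIntegral_mono_set (hInt b) (Filter.Eventually.of_forall fun x => hf0 x)
      (HasSubset.Subset.eventuallyLE (ball_subset_ball hab))
  have hmeas : Measurable fun ρ : ℝ => (ρ ^ (n-1))⁻¹ * I ρ :=
    ((measurable_id.pow_const _).inv).mul hI_mono.measurable
  -- the elementary integral bound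
  have key : ∀ R : ℝ, 1 < R →
      (∫ ρ in Set.Ioc (1:ℝ) R, (ρ ^ (n-1))⁻¹ * I ρ) ≤ I R / ((n:ℝ) - 2) := by
    intro R hR
    have hbound : ∀ ρ ∈ Set.Ioc (1:ℝ) R, ‖(ρ ^ (n-1))⁻¹ * I ρ‖ ≤ I R := by
      intro ρ hρ
      have h1 : (1:ℝ) ≤ ρ ^ (n-1) := one_le_pow₀ hρ.1.le
      have h2 : (ρ ^ (n-1) : ℝ)⁻¹ ≤ 1 := inv_le_one_of_one_le₀ h1
      have h3 : (0:ℝ) ≤ (ρ ^ (n-1) : ℝ)⁻¹ := inv_nonneg.mpr (le_trans zero_le_one h1)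
      have h4 : I ρ ≤ I R := hI_mono hρ.2
      have h5 : 0 ≤ I ρ := hI_nonneg ρ
      rw [Real.norm_eq_abs, abs_of_nonneg (mul_nonneg h3 h5)]
      nlinarith
    have hRint : IntegrableOn (fun ρ : ℝ => (ρ ^ (n-1))⁻¹ * I ρ) (Set.Ioc 1 R) := by
      apply Measure.integrableOn_of_bounded (M := I R) measure_Ioc_lt_top.ne
        hmeas.aestronglyMeasurable
      filter_upwards [ae_restrict_mem measurableSet_Ioc] with ρ hρ using hbound ρ hρ
    have hBint : IntegrableOn (fun ρ : ℝ => (ρ ^ (n-1) : ℝ)⁻¹ * I R) (Set.Ioc 1 R) := by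
      apply Measure.integrableOn_of_bounded (M := I R) measure_Ioc_lt_top.ne
        (((measurable_id.pow_const _).inv.mul_const _).aestronglyMeasurable)
      filter_upwards [ae_restrict_mem measurableSet_Ioc] with ρ hρ
      simp only [id_eq, Pi.inv_apply]
      have h1 : (1:ℝ) ≤ ρ ^ (n-1) := one_le_pow₀ hρ.1.le
      have h2 : (ρ ^ (n-1) : ℝ)⁻¹ ≤ 1 := inv_le_one_of_one_le₀ h1
      have h3 : (0:ℝ) ≤ (ρ ^ (n-1) : ℝ)⁻¹ := inv_nonneg.mpr (le_trans zero_le_one h1)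
      rw [Real.norm_eq_abs, abs_of_nonneg (mul_nonneg h3 (hI_nonneg R))]
      nlinarith [hI_nonneg R]
    have step1 : (∫ ρ in Set.Ioc (1:ℝ) R, (ρ ^ (n-1))⁻¹ * I ρ) ≤
        ∫ ρ in Set.Ioc (1:ℝ) R, (ρ ^ (n-1) : ℝ)⁻¹ * I R := by
      apply setIntegral_mono_on hRint hBint measurableSet_Ioc
      intro ρ hρ
      have h1 : (1:ℝ) ≤ ρ ^ (n-1) := one_le_pow₀ hρ.1.le
      exact mul_le_mul_of_nonneg_left (hI_mono hρ.2) (inv_nonneg.mpr (le_trans zero_le_one h1))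
    have hcast : ((n - 1 : ℕ) : ℝ) = (n:ℝ) - 1 := by
      have : 1 ≤ n := by omega
      push_cast [this]
      ring
    have hexp : -((n:ℝ) - 1) < -1 := by linarith
    have step2 : (∫ ρ in Set.Ioc (1:ℝ) R, (ρ ^ (n-1) : ℝ)⁻¹) ≤ 1 / ((n:ℝ) - 2) := by
      have hcongr : (∫ ρ in Set.Ioc (1:ℝ) R, (ρ ^ (n-1) : ℝ)⁻¹) =
          ∫ ρ in Set.Ioc (1:ℝ) R, ρ ^ (-((n:ℝ) - 1)) := by
        apply setIntegral_congr_fun measurableSet_Ioc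
        intro ρ hρ
        have hρ0 : (0:ℝ) < ρ := lt_trans one_pos hρ.1
        show (ρ ^ (n-1) : ℝ)⁻¹ = ρ ^ (-((n:ℝ) - 1))
        rw [← Real.rpow_natCast ρ (n-1), ← Real.rpow_neg hρ0.le, hcast]
      rw [hcongr]
      have hint : IntegrableOn (fun ρ : ℝ => ρ ^ (-((n:ℝ) - 1))) (Set.Ioi 1) :=
        integrableOn_Ioi_rpow_of_lt hexp one_pos
      have hmono : (∫ ρ in Set.Ioc (1:ℝ) R, ρ ^ (-((n:ℝ) - 1))) ≤
          ∫ ρ in Set.Ioi (1:ℝ), ρ ^ (-((n:ℝ) - 1)) := by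
        apply setIntegral_mono_set hint
        · filter_upwards [ae_restrict_mem measurableSet_Ioi] with ρ hρ
          exact Real.rpow_nonneg (le_trans one_pos.le (le_of_lt hρ)) _
        · exact HasSubset.Subset.eventuallyLE Set.Ioc_subset_Ioi_self
      have hval : (∫ ρ in Set.Ioi (1:ℝ), ρ ^ (-((n:ℝ) - 1))) = 1 / ((n:ℝ) - 2) := by
        rw [integral_Ioi_rpow_of_lt hexp one_pos, Real.one_rpow]
        rw [div_eq_div_iff (by nlinarith) (by linarith)]
        ring
      linarith [hmono, hval.le]
    calc (∫ ρ in Set.Ioc (1:ℝ) R, (ρ ^ (n-1))⁻¹ * I ρ)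
        ≤ ∫ ρ in Set.Ioc (1:ℝ) R, (ρ ^ (n-1) : ℝ)⁻¹ * I R := step1
      _ = (∫ ρ in Set.Ioc (1:ℝ) R, (ρ ^ (n-1) : ℝ)⁻¹) * I R := by rw [integral_mul_const]
      _ ≤ (1 / ((n:ℝ) - 2)) * I R :=
          mul_le_mul_of_nonneg_right step2 (hI_nonneg R)
      _ = I R / ((n:ℝ) - 2) := by ring
  -- eventually the average is ≥ A₀/2
  have hev : ∀ᶠ R in atTop, A₀ / 2 <
      (Real.log R)⁻¹ * ∫ ρ in Set.Ioc (1:ℝ) R, (ρ ^ (n-1))⁻¹ * I ρ :=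
    hA.eventually (eventually_gt_nhds (by linarith))
  obtain ⟨R₀, hR₀⟩ := eventually_atTop.mp (hev.and (eventually_gt_atTop (1:ℝ)))
  have hmain : ∀ ρ ≥ max R₀ 2,
      ((n:ℝ) - 2) / 2 * A₀ * Real.log ρ ≤ I ρ := by
    intro ρ hρ
    have hρR₀ : ρ ≥ R₀ := le_trans (le_max_left _ _) hρ
    have hρ1 : 1 < ρ := lt_of_lt_of_le (by norm_num) (le_trans (le_max_right _ _) hρ)
    obtain ⟨hg, -⟩ := hR₀ ρ hρR₀
    have hlog : 0 < Real.log ρ := Real.log_pos hρ1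
    have h4 : A₀ / 2 ≤ (Real.log ρ)⁻¹ * (I ρ / ((n:ℝ) - 2)) :=
      le_trans hg.le (mul_le_mul_of_nonneg_left (key ρ hρ1) (inv_nonneg.mpr hlog.le))
    rw [inv_mul_eq_div, le_div_iff₀ hlog, le_div_iff₀ hn2] at h4
    have heq : ((n:ℝ) - 2) / 2 * A₀ * Real.log ρ = A₀ / 2 * Real.log ρ * ((n:ℝ) - 2) := by
      ring
    rw [heq]; exact h4
  refine ⟨⟨max R₀ 2, lt_of_lt_of_le one_lt_two (le_max_right _ _), hmain⟩, ?_⟩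
  have htend : Tendsto (fun ρ : ℝ => ((n:ℝ) - 2) / 2 * A₀ * Real.log ρ) atTop atTop :=
    Real.tendsto_log_atTop.const_mul_atTop (by positivity)
  apply tendsto_atTop_mono' atTop _ htend
  filter_upwards [eventually_ge_atTop (max R₀ 2)] with ρ hρ using hmain ρ hρ
end

section
/- Let n ≥ 3 and let f : ℝⁿ → ℝ be continuous with 0 ≤ f(x) ≤ A₁/|x|² for all x ≠ 0 and some A₁ > 0. Then there is a constant C > 0 such that for all x with |x| ≥ 2, ∫_{|y| ≤ 2|x|} (|y|/|x−y|^{n−1}) f(y) dy ≤ C. -/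
open MeasureTheory Metric
open Set
open scoped ENNReal

section AuxRadial

variable {E : Type*} [NormedAddCommGroup E] [NormedSpace ℝ E] [MeasurableSpace E]
  [BorelSpace E] [FiniteDimensional ℝ E] [Nontrivial E]

lemma lintegral_fun_norm_addHaar_aux (μ : Measure E) [μ.IsAddHaarMeasure]
    (g : ℝ → ℝ≥0∞) (hg : Measurable g) :
    ∫⁻ x, g ‖x‖ ∂μ = μ.toSphere Set.univ *
      ∫⁻ r in Ioi (0:ℝ), ENNReal.ofReal (r ^ (Module.finrank ℝ E - 1)) * g r := by
  have hmes : Measurable fun p : sphere (0:E) 1 × Ioi (0:ℝ) => g p.2 :=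
    hg.comp (measurable_subtype_coe.comp measurable_snd)
  calc
    ∫⁻ x, g ‖x‖ ∂μ = ∫⁻ x : ({(0:E)}ᶜ : Set E), g ‖x.1‖ ∂(μ.comap (↑)) := by
      rw [lintegral_subtype_comap (measurableSet_singleton (0:E)).compl (fun x => g ‖x‖),
        restrict_compl_singleton]
    _ = ∫⁻ p : sphere (0:E) 1 × Ioi (0:ℝ), g p.2
        ∂(μ.toSphere.prod (.volumeIoiPow (Module.finrank ℝ E - 1))) := by
      rw [← (μ.measurePreserving_homeomorphUnitSphereProd).lintegral_comp
        (f := fun p : sphere (0:E) 1 × Ioi (0:ℝ) => g p.2) hmes]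
      simp [homeomorphUnitSphereProd_apply_snd_coe]
    _ = μ.toSphere Set.univ * ∫⁻ r : Ioi (0:ℝ), g r
        ∂(Measure.volumeIoiPow (Module.finrank ℝ E - 1)) := by
      rw [lintegral_prod (fun p : sphere (0:E) 1 × Ioi (0:ℝ) => g p.2) hmes.aemeasurable]
      simp [lintegral_const, mul_comm]
    _ = μ.toSphere Set.univ *
        ∫⁻ r in Ioi (0:ℝ), ENNReal.ofReal (r ^ (Module.finrank ℝ E - 1)) * g r := by
      congr 1
      rw [← lintegral_subtype_comap measurableSet_Ioi
        (fun r : ℝ => ENNReal.ofReal (r ^ (Module.finrank ℝ E - 1)) * g r),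
        Measure.volumeIoiPow,
        lintegral_withDensity_eq_lintegral_mul _
          (f := fun r : Ioi (0:ℝ) => ENNReal.ofReal (r.1 ^ (Module.finrank ℝ E - 1)))
          ((measurable_subtype_coe.pow_const _).ennreal_ofReal)
          (g := fun r : Ioi (0:ℝ) => g r) (hg.comp measurable_subtype_coe)]
      rfl

lemma lintegral_closedBall_inv_pow (μ : Measure E) [μ.IsAddHaarMeasure]
    (k : ℕ) (hk : k < Module.finrank ℝ E) (R : ℝ) (hR : 0 ≤ R) :
    ∫⁻ y in closedBall (0:E) R, ENNReal.ofReal (1 / ‖y‖ ^ k) ∂μ ≤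
      μ.toSphere Set.univ *
        ENNReal.ofReal (R ^ (Module.finrank ℝ E - k) / (Module.finrank ℝ E - k)) := by
  set m := Module.finrank ℝ E with hm
  set g : ℝ → ℝ≥0∞ := fun r => indicator (Iic R) (fun r => ENNReal.ofReal (1 / r ^ k)) r with hgdef
  have hgm : Measurable g :=
    ((measurable_const.div (measurable_id.pow_const k)).ennreal_ofReal).indicator measurableSet_Iic
  have hj : k ≤ m - 1 := by omega
  calc
    ∫⁻ y in closedBall (0:E) R, ENNReal.ofReal (1 / ‖y‖ ^ k) ∂μ
        = ∫⁻ y in closedBall (0:E) R, g ‖y‖ ∂μ := by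
      refine setLIntegral_congr_fun measurableSet_closedBall (fun y hy => ?_)
      rw [hgdef]
      simp only [indicator_of_mem (mem_Iic.2 (mem_closedBall_zero_iff.1 hy))]
    _ ≤ ∫⁻ y, g ‖y‖ ∂μ := setLIntegral_le_lintegral _ _
    _ = μ.toSphere Set.univ * ∫⁻ r in Ioi (0:ℝ), ENNReal.ofReal (r ^ (m - 1)) * g r :=
      lintegral_fun_norm_addHaar_aux μ g hgm
    _ ≤ μ.toSphere Set.univ * ENNReal.ofReal (R ^ (m - k) / (m - k)) := by
      gcongr
      calc
        ∫⁻ r in Ioi (0:ℝ), ENNReal.ofReal (r ^ (m - 1)) * g r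
            = ∫⁻ r in Ioi (0:ℝ),
                indicator (Iic R) (fun r => ENNReal.ofReal (r ^ (m-1)) *
                  ENNReal.ofReal (1 / r ^ k)) r := by
          refine setLIntegral_congr_fun measurableSet_Ioi (fun r _ => ?_)
          by_cases hr : r ∈ Iic R <;>
            simp [hgdef, indicator_of_mem, indicator_of_notMem, hr]
        _ = ∫⁻ r in Iic R ∩ Ioi 0,
              ENNReal.ofReal (r ^ (m-1)) * ENNReal.ofReal (1 / r ^ k) := by
          rw [lintegral_indicator measurableSet_Iic, Measure.restrict_restrict measurableSet_Iic]
        _ = ∫⁻ r in Ioc 0 R, ENNReal.ofReal (r ^ (m - 1 - k)) := by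
          rw [inter_comm, Ioi_inter_Iic]
          refine setLIntegral_congr_fun measurableSet_Ioc (fun r hr => ?_)
          rw [← ENNReal.ofReal_mul (pow_nonneg hr.1.le _)]
          congr 1
          rw [mul_one_div, div_eq_iff (pow_pos hr.1 k).ne', ← pow_add]
          congr 1
          omega
        _ = ENNReal.ofReal (∫ r in Ioc 0 R, r ^ (m - 1 - k)) := by
          rw [← ofReal_integral_eq_lintegral_ofReal
            ((intervalIntegrable_iff_integrableOn_Ioc_of_le hR).mp
              (intervalIntegral.intervalIntegrable_pow (m - 1 - k)))
            ((ae_restrict_iff' measurableSet_Ioc).2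
              (ae_of_all _ fun r hr => pow_nonneg hr.1.le _))]
        _ = ENNReal.ofReal (R ^ (m - k) / (m - k)) := by
          rw [← intervalIntegral.integral_of_le hR, integral_pow]
          have h1 : m - 1 - k + 1 = m - k := by omega
          rw [h1]
          have h2 : ((m - 1 - k : ℕ) : ℝ) + 1 = (m : ℝ) - (k : ℝ) := by
            rw [Nat.cast_sub (by omega), Nat.cast_sub (by omega), Nat.cast_one]; ring
          rw [h2, zero_pow (by omega : m - k ≠ 0)]
          norm_num
        _ ≤ ENNReal.ofReal (R ^ (m - k) / (m - k)) := le_rfl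

end AuxRadial

theorem stmt_6 (n : ℕ) (hn : 3 ≤ n)
    (f : EuclideanSpace ℝ (Fin n) → ℝ) (hf : Continuous f) (A₁ : ℝ) (hA₁ : 0 < A₁)
    (hbd : ∀ x : EuclideanSpace ℝ (Fin n), x ≠ 0 → 0 ≤ f x ∧ f x ≤ A₁ / ‖x‖ ^ 2) :
    ∃ C : ℝ, 0 < C ∧ ∀ x : EuclideanSpace ℝ (Fin n), 2 ≤ ‖x‖ →
      ∫ y in closedBall (0 : EuclideanSpace ℝ (Fin n)) (2 * ‖x‖),
        ‖y‖ / ‖x - y‖ ^ (n-1) * f y ≤ C := by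
  haveI : Nonempty (Fin n) := ⟨⟨0, by omega⟩⟩
  haveI : Nontrivial (EuclideanSpace ℝ (Fin n)) := inferInstance
  have hrk : Module.finrank ℝ (EuclideanSpace ℝ (Fin n)) = n := finrank_euclideanSpace_fin
  set μ : Measure (EuclideanSpace ℝ (Fin n)) := volume with hμ
  set S : ℝ≥0∞ := μ.toSphere Set.univ with hS
  have hSfin : S ≠ ⊤ := measure_ne_top _ _
  have key : ∀ (k : ℕ), k < n → ∀ (R : ℝ), 0 ≤ R →
      ∫⁻ y in closedBall (0 : EuclideanSpace ℝ (Fin n)) R, ENNReal.ofReal (1 / ‖y‖ ^ k) ∂μ ≤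
        S * ENNReal.ofReal (R ^ (n - k) / ((n : ℝ) - k)) := by
    intro k hk R hR
    have := lintegral_closedBall_inv_pow μ k (by rw [hrk]; exact hk) R hR
    rwa [hrk] at this
  have hd : (0:ℝ) < (n:ℝ) - 1 := by
    have : (3:ℝ) ≤ (n:ℝ) := by exact_mod_cast hn
    linarith
  set c₃ : ℝ := A₁ + A₁ * 4 ^ (n-1) / ((n:ℝ) - 1) with hc₃
  have hc₃pos : 0 < c₃ := add_pos hA₁ (div_pos (by positivity) hd)
  refine ⟨(S.toReal + 1) * c₃, by positivity, fun x hx => ?_⟩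
  have hx0 : 0 < ‖x‖ := lt_of_lt_of_le two_pos hx
  set F : EuclideanSpace ℝ (Fin n) → ℝ := fun y => ‖y‖ / ‖x - y‖ ^ (n-1) * f y with hFdef
  have hcont : Continuous fun y : EuclideanSpace ℝ (Fin n) => ‖x - y‖ ^ (n-1) :=
    ((continuous_const.sub continuous_id).norm.pow _)
  have hFmeas : Measurable F :=
    (measurable_norm.div hcont.measurable).mul hf.measurable
  have hFnn : ∀ y, 0 ≤ F y := by
    intro y
    by_cases hy0 : y = 0
    · simp [hFdef, hy0]
    · exact mul_nonneg (by positivity) (hbd y hy0).1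
  set G₁ : EuclideanSpace ℝ (Fin n) → ℝ≥0∞ :=
    indicator (closedBall x (‖x‖/2))
      (fun y => ENNReal.ofReal (2*A₁/‖x‖ * (1/‖x - y‖ ^ (n-1)))) with hG₁
  set G₂ : EuclideanSpace ℝ (Fin n) → ℝ≥0∞ :=
    fun y => ENNReal.ofReal (A₁/(‖x‖/2) ^ (n-1) * (1/‖y‖)) with hG₂
  have hpt : ∀ y, ENNReal.ofReal (F y) ≤ G₁ y + G₂ y := by
    intro y
    by_cases hy0 : y = 0
    · simp [hFdef, hy0]
    obtain ⟨hf0, hfle⟩ := hbd y hy0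
    have hyn : 0 < ‖y‖ := norm_pos_iff.2 hy0
    have hyf : ‖y‖ * f y ≤ A₁ / ‖y‖ := by
      calc ‖y‖ * f y ≤ ‖y‖ * (A₁/‖y‖^2) := by gcongr
        _ = A₁/‖y‖ := by field_simp
    by_cases hc : ‖x - y‖ ≤ ‖x‖/2
    · have hymem : y ∈ closedBall x (‖x‖/2) := by
        rw [mem_closedBall, dist_eq_norm, norm_sub_rev]; exact hc
      have hyhalf : ‖x‖/2 ≤ ‖y‖ := by
        have h := norm_sub_norm_le x y; linarith
      have hFb : F y ≤ 2*A₁/‖x‖ * (1/‖x - y‖ ^ (n-1)) := by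
        have h1 : F y = (‖y‖ * f y) * (1/‖x - y‖ ^ (n-1)) := by rw [hFdef]; ring
        rw [h1]
        have h2 : ‖y‖ * f y ≤ 2*A₁/‖x‖ := by
          refine hyf.trans ?_
          rw [div_le_div_iff₀ hyn hx0]
          nlinarith
        exact mul_le_mul_of_nonneg_right h2 (by positivity)
      calc ENNReal.ofReal (F y) ≤ ENNReal.ofReal (2*A₁/‖x‖ * (1/‖x - y‖ ^ (n-1))) :=
            ENNReal.ofReal_le_ofReal hFb
        _ = G₁ y := by rw [hG₁, indicator_of_mem hymem]
        _ ≤ G₁ y + G₂ y := le_self_add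
    · push_neg at hc
      have hpow : (‖x‖/2) ^ (n-1) ≤ ‖x - y‖ ^ (n-1) :=
        pow_le_pow_left₀ (by positivity) hc.le _
      have hxypos : (0:ℝ) < (‖x‖/2) ^ (n-1) := by positivity
      have hFb : F y ≤ A₁/(‖x‖/2) ^ (n-1) * (1/‖y‖) := by
        have h1 : F y = (‖y‖ * f y) / ‖x - y‖ ^ (n-1) := by rw [hFdef]; ring
        rw [h1]
        calc (‖y‖ * f y) / ‖x - y‖ ^ (n-1) ≤ (A₁/‖y‖) / ‖x - y‖ ^ (n-1) := by
              gcongr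
          _ ≤ (A₁/‖y‖) / (‖x‖/2) ^ (n-1) := by gcongr
          _ = A₁/(‖x‖/2) ^ (n-1) * (1/‖y‖) := by ring
      calc ENNReal.ofReal (F y) ≤ G₂ y := ENNReal.ofReal_le_ofReal hFb
        _ ≤ G₁ y + G₂ y := le_add_self
  -- bound the G₁ part
  have hG₁bound : ∫⁻ y in closedBall (0 : EuclideanSpace ℝ (Fin n)) (2*‖x‖), G₁ y ∂μ ≤
      S * ENNReal.ofReal A₁ := by
    have htrans : ∫⁻ y in closedBall x (‖x‖/2),
        ENNReal.ofReal (1/‖x - y‖ ^ (n-1)) ∂μ =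
        ∫⁻ z in closedBall (0 : EuclideanSpace ℝ (Fin n)) (‖x‖/2),
          ENNReal.ofReal (1/‖z‖ ^ (n-1)) ∂μ := by
      have hmp : MeasurePreserving (fun y : EuclideanSpace ℝ (Fin n) => x - y) μ μ :=
        Measure.measurePreserving_sub_left μ x
      have hpre : (fun y : EuclideanSpace ℝ (Fin n) => x - y) ⁻¹'
          closedBall (0 : EuclideanSpace ℝ (Fin n)) (‖x‖/2) = closedBall x (‖x‖/2) := by
        ext y
        simp [mem_closedBall, dist_eq_norm, norm_sub_rev x y]
      rw [← hpre]
      exact hmp.setLIntegral_comp_preimage measurableSet_closedBall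
        ((measurable_const.div (measurable_norm.pow_const _)).ennreal_ofReal)

    calc
      ∫⁻ y in closedBall (0 : EuclideanSpace ℝ (Fin n)) (2*‖x‖), G₁ y ∂μ
          ≤ ∫⁻ y, G₁ y ∂μ := setLIntegral_le_lintegral _ _
      _ = ∫⁻ y in closedBall x (‖x‖/2),
            ENNReal.ofReal (2*A₁/‖x‖ * (1/‖x - y‖ ^ (n-1))) ∂μ := by
        rw [hG₁, lintegral_indicator measurableSet_closedBall]
      _ = ENNReal.ofReal (2*A₁/‖x‖) * ∫⁻ y in closedBall x (‖x‖/2),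
            ENNReal.ofReal (1/‖x - y‖ ^ (n-1)) ∂μ := by
        rw [← lintegral_const_mul _ (f := fun y => ENNReal.ofReal (1/‖x - y‖ ^ (n-1)))
          ((measurable_const.div hcont.measurable).ennreal_ofReal)]
        refine setLIntegral_congr_fun measurableSet_closedBall (fun y _ => ?_)
        rw [← ENNReal.ofReal_mul (by positivity)]
      _ = ENNReal.ofReal (2*A₁/‖x‖) * ∫⁻ z in closedBall (0 : EuclideanSpace ℝ (Fin n)) (‖x‖/2),
            ENNReal.ofReal (1/‖z‖ ^ (n-1)) ∂μ := by rw [htrans]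
      _ ≤ ENNReal.ofReal (2*A₁/‖x‖) *
            (S * ENNReal.ofReal ((‖x‖/2) ^ (n - (n-1)) / ((n:ℝ) - (n-1 : ℕ)))) := by
        gcongr
        exact key (n-1) (by omega) (‖x‖/2) (by positivity)
      _ = S * ENNReal.ofReal A₁ := by
        rw [← mul_assoc, mul_comm (ENNReal.ofReal (2*A₁/‖x‖)) S, mul_assoc,
          ← ENNReal.ofReal_mul (by positivity)]
        congr 2
        have h1 : n - (n-1) = 1 := by omega
        have h2 : ((n-1 : ℕ) : ℝ) = (n:ℝ) - 1 := by
          rw [Nat.cast_sub (by omega), Nat.cast_one]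
        rw [h1, h2, pow_one]
        field_simp
        ring
  -- bound the G₂ part
  have hG₂bound : ∫⁻ y in closedBall (0 : EuclideanSpace ℝ (Fin n)) (2*‖x‖), G₂ y ∂μ ≤
      S * ENNReal.ofReal (A₁ * 4 ^ (n-1) / ((n:ℝ) - 1)) := by
    calc
      ∫⁻ y in closedBall (0 : EuclideanSpace ℝ (Fin n)) (2*‖x‖), G₂ y ∂μ
          = ENNReal.ofReal (A₁/(‖x‖/2) ^ (n-1)) *
            ∫⁻ y in closedBall (0 : EuclideanSpace ℝ (Fin n)) (2*‖x‖),
              ENNReal.ofReal (1/‖y‖ ^ 1) ∂μ := by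
        rw [← lintegral_const_mul _ (f := fun y => ENNReal.ofReal (1/‖y‖ ^ 1))
          ((measurable_const.div (measurable_norm.pow_const 1)).ennreal_ofReal)]
        refine setLIntegral_congr_fun measurableSet_closedBall (fun y _ => ?_)
        rw [hG₂, ← ENNReal.ofReal_mul (by positivity), pow_one]
      _ ≤ ENNReal.ofReal (A₁/(‖x‖/2) ^ (n-1)) *
            (S * ENNReal.ofReal ((2*‖x‖) ^ (n - 1) / ((n:ℝ) - (1:ℕ)))) := by
        gcongr
        exact key 1 (by omega) (2*‖x‖) (by positivity)
      _ = S * ENNReal.ofReal (A₁ * 4 ^ (n-1) / ((n:ℝ) - 1)) := by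
        rw [← mul_assoc, mul_comm (ENNReal.ofReal (A₁/(‖x‖/2) ^ (n-1))) S, mul_assoc,
          ← ENNReal.ofReal_mul (by positivity)]
        congr 2
        have h4 : (2*‖x‖) ^ (n-1) = 4 ^ (n-1) * (‖x‖/2) ^ (n-1) := by
          rw [← mul_pow]; congr 1; ring
        rw [Nat.cast_one, h4]
        field_simp
  have hG₁meas : Measurable G₁ := by
    rw [hG₁]
    exact (((measurable_const.div hcont.measurable).const_mul _).ennreal_ofReal).indicator
      measurableSet_closedBall
  -- put everything together
  have hmain : ∫⁻ y in closedBall (0 : EuclideanSpace ℝ (Fin n)) (2*‖x‖),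
      ENNReal.ofReal (F y) ∂μ ≤ ENNReal.ofReal ((S.toReal + 1) * c₃) := by
    calc
      ∫⁻ y in closedBall (0 : EuclideanSpace ℝ (Fin n)) (2*‖x‖), ENNReal.ofReal (F y) ∂μ
          ≤ ∫⁻ y in closedBall (0 : EuclideanSpace ℝ (Fin n)) (2*‖x‖), (G₁ y + G₂ y) ∂μ :=
        lintegral_mono hpt
      _ = (∫⁻ y in closedBall (0 : EuclideanSpace ℝ (Fin n)) (2*‖x‖), G₁ y ∂μ) +
          ∫⁻ y in closedBall (0 : EuclideanSpace ℝ (Fin n)) (2*‖x‖), G₂ y ∂μ :=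
        lintegral_add_left hG₁meas _
      _ ≤ S * ENNReal.ofReal A₁ + S * ENNReal.ofReal (A₁ * 4 ^ (n-1) / ((n:ℝ) - 1)) :=
        add_le_add hG₁bound hG₂bound
      _ = S * ENNReal.ofReal c₃ := by
        rw [← mul_add, ← ENNReal.ofReal_add hA₁.le (by positivity), hc₃]
      _ = ENNReal.ofReal S.toReal * ENNReal.ofReal c₃ := by
        rw [ENNReal.ofReal_toReal hSfin]
      _ = ENNReal.ofReal (S.toReal * c₃) := (ENNReal.ofReal_mul ENNReal.toReal_nonneg).symm
      _ ≤ ENNReal.ofReal ((S.toReal + 1) * c₃) := by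
        refine ENNReal.ofReal_le_ofReal ?_
        nlinarith [ENNReal.toReal_nonneg (a := S), hc₃pos.le]
  calc
    ∫ y in closedBall (0 : EuclideanSpace ℝ (Fin n)) (2 * ‖x‖), ‖y‖ / ‖x - y‖ ^ (n-1) * f y
        = (∫⁻ y in closedBall (0 : EuclideanSpace ℝ (Fin n)) (2*‖x‖),
            ENNReal.ofReal (F y) ∂μ).toReal := by
      rw [integral_eq_lintegral_of_nonneg_ae (ae_of_all _ hFnn)
        hFmeas.aestronglyMeasurable]
    _ ≤ (S.toReal + 1) * c₃ :=
      ENNReal.toReal_le_of_le_ofReal (by positivity) hmain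
end

section
/- Let n ≥ 3, α > 2β, and suppose v is a C² radially symmetric solution of Δv + αe^v + βx·∇e^v = 0 in ℝⁿ (written v = v(r), r = |x|) satisfying lim_{r→∞} r² e^{v(r)} = 2(n−2)/(α−2β). Then lim_{r→∞} r v'(r) = −2. -/
open MeasureTheory Metric Filter
open scoped RealInnerProductSpace

noncomputable def lap {n : ℕ} (v : EuclideanSpace ℝ (Fin n) → ℝ)
    (x : EuclideanSpace ℝ (Fin n)) : ℝ :=
  ∑ i : Fin n, fderiv ℝ (fun y => fderiv ℝ v y (EuclideanSpace.single i 1)) x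
    (EuclideanSpace.single i 1)

lemma norm_hasFDerivAt {E : Type*} [NormedAddCommGroup E] [InnerProductSpace ℝ E]
    {x : E} (hx : x ≠ 0) :
    HasFDerivAt (fun y : E => ‖y‖) (‖x‖⁻¹ • innerSL ℝ x) x := by
  have hxn : (0:ℝ) < ‖x‖ := norm_pos_iff.2 hx
  have h1 : HasFDerivAt (fun y : E => ‖y‖ ^ 2) (2 • innerSL ℝ x) x :=
    (hasFDerivAt_id x).norm_sq
  have h2 : HasDerivAt Real.sqrt (1 / (2 * Real.sqrt (‖x‖ ^ 2))) (‖x‖ ^ 2) :=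
    Real.hasDerivAt_sqrt (by positivity)
  have h3 := h2.comp_hasFDerivAt x h1
  have heq : (Real.sqrt ∘ fun y : E => ‖y‖ ^ 2) = fun y : E => ‖y‖ := by
    funext y; simp [Function.comp, Real.sqrt_sq (norm_nonneg y)]
  rw [heq] at h3
  refine h3.congr_fderiv ?_
  rw [Real.sqrt_sq (norm_nonneg x)]
  ext y
  simp [smul_smul]
  ring

lemma radial_hasFDerivAt {E : Type*} [NormedAddCommGroup E] [InnerProductSpace ℝ E]
    (v : E → ℝ) (φ : ℝ → ℝ) (hrad : ∀ x, v x = φ ‖x‖) {x : E} (hx : x ≠ 0)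
    {d : ℝ} (hφd : HasDerivAt φ d ‖x‖) :
    HasFDerivAt v ((d * ‖x‖⁻¹) • innerSL ℝ x) x := by
  have h1 := hφd.comp_hasFDerivAt x (norm_hasFDerivAt hx)
  have heq : (φ ∘ fun y : E => ‖y‖) = v := by funext y; rw [Function.comp, hrad]
  rw [heq] at h1
  refine h1.congr_fderiv ?_
  rw [smul_smul]


section
variable {n : ℕ} (v : EuclideanSpace ℝ (Fin n) → ℝ) (φ : ℝ → ℝ) (i₀ : Fin n)

local notation "E" => EuclideanSpace ℝ (Fin n)

lemma norm_ray (t : ℝ) (ht : 0 ≤ t) : ‖t • EuclideanSpace.single i₀ (1:ℝ)‖ = t := by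
  rw [norm_smul, EuclideanSpace.norm_single, norm_one, mul_one, Real.norm_eq_abs,
    abs_of_nonneg ht]

lemma lemA (hv : ContDiff ℝ 2 v) (hradial : ∀ x : E, v x = φ ‖x‖) {r : ℝ} (hr : 0 < r) :
    HasDerivAt φ
      (fderiv ℝ v (r • EuclideanSpace.single i₀ 1) (EuclideanSpace.single i₀ 1)) r := by
  set e : E := EuclideanSpace.single i₀ 1
  have hp : HasDerivAt (fun t : ℝ => t • e) e r := by
    simpa using (hasDerivAt_id r).smul_const e
  have hvd : HasFDerivAt v (fderiv ℝ v (r • e)) (r • e) :=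
    ((hv.differentiable two_ne_zero) (r • e)).hasFDerivAt
  have hcomp := hvd.comp_hasDerivAt r hp
  refine hcomp.congr_of_eventuallyEq ?_
  filter_upwards [eventually_gt_nhds hr] with t ht
  show φ t = v (t • e)
  rw [hradial, norm_ray _ _ ht.le]

lemma lemA' (hv : ContDiff ℝ 2 v) (hradial : ∀ x : E, v x = φ ‖x‖) {r : ℝ} (hr : 0 < r) :
    deriv φ r = fderiv ℝ v (r • EuclideanSpace.single i₀ 1) (EuclideanSpace.single i₀ 1) :=
  (lemA v φ i₀ hv hradial hr).deriv

lemma lemW (hv : ContDiff ℝ 2 v) :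
    ContDiff ℝ 1 (fun y : E => fderiv ℝ v y (EuclideanSpace.single i₀ 1)) :=
  (hv.fderiv_right (le_refl _)).clm_apply contDiff_const

lemma lemB (hv : ContDiff ℝ 2 v) (hradial : ∀ x : E, v x = φ ‖x‖) {r : ℝ} (hr : 0 < r) :
    HasDerivAt (deriv φ)
      (fderiv ℝ (fun y : E => fderiv ℝ v y (EuclideanSpace.single i₀ 1))
        (r • EuclideanSpace.single i₀ 1) (EuclideanSpace.single i₀ 1)) r := by
  set e : E := EuclideanSpace.single i₀ 1
  have hp : HasDerivAt (fun t : ℝ => t • e) e r := by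
    simpa using (hasDerivAt_id r).smul_const e
  have hW := lemW v i₀ hv
  have hWd : HasFDerivAt (fun y : E => fderiv ℝ v y e)
      (fderiv ℝ (fun y : E => fderiv ℝ v y e) (r • e)) (r • e) :=
    ((hW.differentiable one_ne_zero) (r • e)).hasFDerivAt
  have hcomp := hWd.comp_hasDerivAt r hp
  refine hcomp.congr_of_eventuallyEq ?_
  filter_upwards [eventually_gt_nhds hr] with t ht
  exact lemA' v φ i₀ hv hradial ht

include i₀ in
lemma lemDφ (hv : ContDiff ℝ 2 v) (hradial : ∀ x : E, v x = φ ‖x‖) {s : ℝ} (hs : 0 < s) :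
    HasDerivAt φ (deriv φ s) s := by
  have h := lemA v φ i₀ hv hradial hs
  rwa [← lemA' v φ i₀ hv hradial hs] at h

lemma lemC (hv : ContDiff ℝ 2 v) (hradial : ∀ x : E, v x = φ ‖x‖) {r : ℝ} (hr : 0 < r)
    (i : Fin n) (hi : i ≠ i₀) :
    fderiv ℝ (fun y : E => fderiv ℝ v y (EuclideanSpace.single i 1))
      (r • EuclideanSpace.single i₀ 1) (EuclideanSpace.single i 1) = deriv φ r / r := by
  set x : E := r • EuclideanSpace.single i₀ 1 with hxdef
  have hxnorm : ‖x‖ = r := norm_ray i₀ r hr.le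
  have hx0 : x ≠ 0 := by
    intro h; rw [h, norm_zero] at hxnorm; exact hr.ne' hxnorm.symm
  set e : E := EuclideanSpace.single i 1 with hedef
  set g : E → ℝ := fun y => (deriv φ ‖y‖ * ‖y‖⁻¹) * (innerSL ℝ e y) with hgdef
  have heq : (fun y : E => fderiv ℝ v y e) =ᶠ[nhds x] g := by
    filter_upwards [IsOpen.mem_nhds isOpen_compl_singleton hx0] with y hy
    have hy0 : y ≠ 0 := hy
    have hyn : 0 < ‖y‖ := norm_pos_iff.2 hy0
    have hd : HasDerivAt φ (deriv φ ‖y‖) ‖y‖ := lemDφ v φ i₀ hv hradial hyn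
    have hder := radial_hasFDerivAt v φ hradial hy0 hd
    rw [hder.fderiv]
    simp only [hgdef, ContinuousLinearMap.smul_apply, innerSL_apply_apply, smul_eq_mul]
    rw [real_inner_comm]
  rw [heq.fderiv_eq]
  -- now compute fderiv g x e
  have hN := norm_hasFDerivAt hx0
  have hDd : HasDerivAt (deriv φ)
      (fderiv ℝ (fun y : E => fderiv ℝ v y (EuclideanSpace.single i₀ 1)) x
        (EuclideanSpace.single i₀ 1)) ‖x‖ := by
    rw [hxnorm]; exact lemB v φ i₀ hv hradial hr
  have hA := hDd.comp_hasFDerivAt x hN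
  have hInv : HasDerivAt (fun s : ℝ => s⁻¹) (-(‖x‖ ^ 2)⁻¹) ‖x‖ := by
    rw [hxnorm]; exact hasDerivAt_inv hr.ne'
  have hC := hInv.comp_hasFDerivAt x hN
  have hB : HasFDerivAt (fun y : E => innerSL ℝ e y) (innerSL ℝ e) x :=
    (innerSL ℝ e).hasFDerivAt
  have htot : HasFDerivAt g _ x := (hA.mul hC).mul hB
  rw [htot.fderiv]
  have hBx : innerSL ℝ e x = 0 := by
    simp only [innerSL_apply_apply, hedef, hxdef]
    rw [real_inner_smul_right, EuclideanSpace.inner_single_left]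
    simp only [EuclideanSpace.single_apply]
    simp only [map_one, one_mul, smul_eq_mul]
    rw [if_neg hi]
    ring
  have hBe : innerSL ℝ e e = 1 := by
    simp only [innerSL_apply_apply, hedef]
    rw [EuclideanSpace.inner_single_left]
    simp [EuclideanSpace.single_apply]
  simp only [ContinuousLinearMap.add_apply, ContinuousLinearMap.smul_apply, hBx, hBe,
    Function.comp, Pi.mul_apply, smul_eq_mul, zero_smul, zero_mul, add_zero, mul_one, hxnorm]
  ring

lemma lap_ray (hv : ContDiff ℝ 2 v) (hradial : ∀ x : E, v x = φ ‖x‖) {r : ℝ} (hr : 0 < r) :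
    lap v (r • EuclideanSpace.single i₀ 1) =
      fderiv ℝ (fun y : E => fderiv ℝ v y (EuclideanSpace.single i₀ 1))
        (r • EuclideanSpace.single i₀ 1) (EuclideanSpace.single i₀ 1)
      + ((n : ℝ) - 1) * (deriv φ r / r) := by
  set x : E := r • EuclideanSpace.single i₀ 1
  set K : ℝ := fderiv ℝ (fun y : E => fderiv ℝ v y (EuclideanSpace.single i₀ 1)) x
    (EuclideanSpace.single i₀ 1)
  set c : ℝ := deriv φ r / r
  have hterm : ∀ i : Fin n,
      fderiv ℝ (fun y : E => fderiv ℝ v y (EuclideanSpace.single i 1)) x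
        (EuclideanSpace.single i 1) = (if i = i₀ then K - c else 0) + c := by
    intro i
    by_cases hi : i = i₀
    · subst hi; simp; rfl
    · rw [lemC v φ i₀ hv hradial hr i hi, if_neg hi, zero_add]
  have hcard : 0 < n := Fin.pos i₀
  rw [lap]
  rw [Finset.sum_congr rfl (fun i _ => hterm i)]
  rw [Finset.sum_add_distrib, Finset.sum_ite_eq' Finset.univ i₀ (fun _ => K - c)]
  simp [Finset.card_univ, mul_comm]
  ring

lemma grad_ray (hv : ContDiff ℝ 2 v) (hradial : ∀ x : E, v x = φ ‖x‖) {r : ℝ} (hr : 0 < r) :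
    ⟪(r • EuclideanSpace.single i₀ 1 : E),
      gradient (fun y : E => Real.exp (v y)) (r • EuclideanSpace.single i₀ 1)⟫ =
      Real.exp (φ r) * deriv φ r * r := by
  set x : E := r • EuclideanSpace.single i₀ 1 with hxdef
  have hxnorm : ‖x‖ = r := norm_ray i₀ r hr.le
  have hx0 : x ≠ 0 := by
    intro h; rw [h, norm_zero] at hxnorm; exact hr.ne' hxnorm.symm
  have hd : HasDerivAt φ (deriv φ r) ‖x‖ := by
    rw [hxnorm]; exact lemDφ v φ i₀ hv hradial hr
  have hvf : HasFDerivAt v ((deriv φ r * ‖x‖⁻¹) • innerSL ℝ x) x :=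
    radial_hasFDerivAt v φ hradial hx0 hd
  have hexp : HasFDerivAt (fun y : E => Real.exp (v y))
      (Real.exp (v x) • ((deriv φ r * ‖x‖⁻¹) • innerSL ℝ x)) x :=
    (Real.hasDerivAt_exp (v x)).comp_hasFDerivAt x hvf
  have hgrad := hexp.hasGradientAt.gradient
  rw [hgrad, real_inner_comm, InnerProductSpace.toDual_symm_apply]
  have hvx : v x = φ r := by rw [hradial, hxnorm]
  simp only [ContinuousLinearMap.smul_apply, innerSL_apply_apply, smul_eq_mul,
    real_inner_self_eq_norm_sq, hxnorm, hvx]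
  field_simp

include i₀ in
lemma lemODE (α β : ℝ) (hv : ContDiff ℝ 2 v) (hradial : ∀ x : E, v x = φ ‖x‖)
    (hpde : ∀ x : E, lap v x + α * Real.exp (v x) +
      β * ⟪x, gradient (fun y => Real.exp (v y)) x⟫ = 0)
    {r : ℝ} (hr : 0 < r) :
    HasDerivAt (deriv φ)
      (-(((n : ℝ) - 1) * (deriv φ r / r)) - α * Real.exp (φ r)
        - β * (Real.exp (φ r) * deriv φ r * r)) r := by
  have hB := lemB v φ i₀ hv hradial hr
  have hpde' := hpde (r • EuclideanSpace.single i₀ 1)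
  rw [lap_ray v φ i₀ hv hradial hr, grad_ray v φ i₀ hv hradial hr] at hpde'
  have hvx : v (r • EuclideanSpace.single i₀ 1) = φ r := by
    rw [hradial, norm_ray i₀ r hr.le]
  rw [hvx] at hpde'
  convert hB using 1
  linarith

include i₀ in
lemma lemKey (α β : ℝ) (hn : 3 ≤ n) (hv : ContDiff ℝ 2 v)
    (hradial : ∀ x : E, v x = φ ‖x‖)
    (hpde : ∀ x : E, lap v x + α * Real.exp (v x) +
      β * ⟪x, gradient (fun y => Real.exp (v y)) x⟫ = 0)
    {r : ℝ} (hr : 0 < r) :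
    r ^ (n - 1) * deriv φ r =
      ((n : ℝ) * β - α) *
        (∫ t in (0:ℝ)..r, t ^ (n - 1) * Real.exp (v (t • EuclideanSpace.single i₀ 1)))
      - β * (r ^ n * Real.exp (φ r)) := by
  set Et : ℝ → ℝ := fun t => Real.exp (v (t • EuclideanSpace.single i₀ 1)) with hEtdef
  have hEtc : Continuous Et := by
    apply Real.continuous_exp.comp
    exact hv.continuous.comp (continuous_id.smul continuous_const)
  have hfc : Continuous (fun t : ℝ => t ^ (n - 1) * Et t) :=
    (continuous_pow (n - 1)).mul hEtc
  set I : ℝ → ℝ := fun s => ∫ t in (0:ℝ)..s, t ^ (n - 1) * Et t with hIdef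
  have hI : ∀ s : ℝ, HasDerivAt I (s ^ (n - 1) * Et s) s := by
    intro s
    exact intervalIntegral.integral_hasDerivAt_right
      (hfc.intervalIntegrable _ _)
      (hfc.stronglyMeasurableAtFilter _ _)
      hfc.continuousAt
  set G : ℝ → ℝ := fun s => s ^ (n - 1) * deriv φ s + (α - n * β) * I s + β * (s ^ n * Et s)
    with hGdef
  have hEtφ : ∀ s : ℝ, 0 ≤ s → Et s = Real.exp (φ s) := by
    intro s hs
    show Real.exp (v (s • EuclideanSpace.single i₀ 1)) = _
    rw [hradial, norm_ray i₀ s hs]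
  have hG' : ∀ s : ℝ, 0 < s → HasDerivAt G 0 s := by
    intro s hs
    have h1 : HasDerivAt (fun t : ℝ => t ^ (n - 1)) (((n:ℝ) - 1) * s ^ (n - 2)) s := by
      have h0 := hasDerivAt_pow (n - 1) s
      have e1 : ((n - 1 : ℕ) : ℝ) = (n : ℝ) - 1 := by
        push_cast [Nat.cast_sub (by omega : 1 ≤ n)]; ring
      have e2 : n - 1 - 1 = n - 2 := by omega
      rw [e1, e2] at h0; exact h0
    have h2 := lemODE v φ i₀ α β hv hradial hpde hs
    have h4 : HasDerivAt Et (Et s * deriv φ s) s := by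
      have hvp : HasDerivAt (fun t : ℝ => v (t • (EuclideanSpace.single i₀ 1 : E)))
          (deriv φ s) s := by
        refine (lemDφ v φ i₀ hv hradial hs).congr_of_eventuallyEq ?_
        filter_upwards [eventually_gt_nhds hs] with t ht
        rw [hradial, norm_ray i₀ t ht.le]
      exact hvp.exp
    have h5 : HasDerivAt (fun t : ℝ => t ^ n) ((n:ℝ) * s ^ (n - 1)) s := by
      simpa using hasDerivAt_pow n s
    have htot := ((h1.mul h2).add ((hI s).const_mul (α - n * β))).add
      ((h5.mul h4).const_mul β)
    refine htot.congr_deriv ?_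
    rw [hEtφ s hs.le]
    have hsne : s ≠ 0 := hs.ne'
    have hpow : s ^ (n - 1) = s ^ (n - 2) * s := by
      rw [← pow_succ]; congr 1; omega
    have hpown : s ^ n = s ^ (n - 1) * s := by
      rw [← pow_succ]; congr 1; omega
    rw [hpown, hpow]
    field_simp
    ring
  have hGc : ∀ a b : ℝ, 0 < a → a ≤ b → G b = G a := by
    intro a b ha hab
    have := constant_of_has_deriv_right_zero
      (f := G) (a := a) (b := b)
      (fun x hx => (hG' x (lt_of_lt_of_le ha hx.1)).continuousAt.continuousWithinAt)
      (fun x hx => (hG' x (lt_of_lt_of_le ha hx.1)).hasDerivWithinAt)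
    exact this b ⟨hab, le_refl b⟩
  set ℓf : ℝ → ℝ := fun s =>
    fderiv ℝ v (s • EuclideanSpace.single i₀ 1) (EuclideanSpace.single i₀ 1) with hℓdef
  have hℓc : Continuous ℓf :=
    ((lemW v i₀ hv).continuous).comp (continuous_id.smul continuous_const)
  have hIc : ContinuousAt I 0 := (hI 0).continuousAt
  set Gc : ℝ → ℝ := fun s => s ^ (n - 1) * ℓf s + (α - n * β) * I s + β * (s ^ n * Et s)
    with hGcdef
  have hGc0 : Tendsto Gc (nhdsWithin 0 (Set.Ioi 0)) (nhds 0) := by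
    have hc : ContinuousAt Gc 0 := by
      exact (((continuous_pow (n - 1)).continuousAt.mul hℓc.continuousAt).add
        (continuousAt_const.mul hIc)).add
        (continuousAt_const.mul ((continuous_pow n).continuousAt.mul hEtc.continuousAt))
    have hval : Gc 0 = 0 := by
      simp only [hGcdef, hIdef]
      rw [zero_pow (by omega : n - 1 ≠ 0), zero_pow (by omega : n ≠ 0),
        intervalIntegral.integral_same]
      ring
    have h2 : ContinuousWithinAt Gc (Set.Ioi 0) 0 := hc.continuousWithinAt
    rw [ContinuousWithinAt, hval] at h2
    exact h2
  have hGeq : G =ᶠ[nhdsWithin 0 (Set.Ioi 0)] Gc := by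
    filter_upwards [self_mem_nhdsWithin] with s hs
    have : deriv φ s = ℓf s := lemA' v φ i₀ hv hradial hs
    simp only [hGdef, hGcdef, this]
  have hG0 : Tendsto G (nhdsWithin 0 (Set.Ioi 0)) (nhds 0) := hGc0.congr' hGeq.symm
  have hGr : Tendsto G (nhdsWithin 0 (Set.Ioi 0)) (nhds (G r)) := by
    have heq : (fun _ : ℝ => G r) =ᶠ[nhdsWithin 0 (Set.Ioi 0)] G := by
      filter_upwards [Ioo_mem_nhdsGT_of_mem ⟨le_refl 0, hr⟩] with s hs
      exact hGc s r hs.1 hs.2.le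
    exact Tendsto.congr' heq tendsto_const_nhds
  have hGr0 : G r = 0 := tendsto_nhds_unique hGr hG0
  have hEtr := hEtφ r hr.le
  show r ^ (n - 1) * deriv φ r = ((n : ℝ) * β - α) * I r - β * (r ^ n * Real.exp (φ r))
  have hGrx : r ^ (n - 1) * deriv φ r + (α - n * β) * I r + β * (r ^ n * Et r) = 0 := hGr0
  rw [hEtr] at hGrx
  linear_combination hGrx

end

lemma cesaro_pow (g : ℝ → ℝ) (hg : Continuous g) (m : ℕ) (hm : 1 ≤ m) (L : ℝ)
    (hlim : Tendsto g atTop (nhds L)) :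
    Tendsto (fun r : ℝ => (∫ t in (0:ℝ)..r, t ^ (m - 1) * g t) / r ^ m) atTop
      (nhds (L / m)) := by
  have hmr : (1:ℝ) ≤ (m:ℝ) := by exact_mod_cast hm
  have hmpos : (0:ℝ) < m := lt_of_lt_of_le one_pos hmr
  have hfc : Continuous (fun t : ℝ => t ^ (m - 1) * g t) := (continuous_pow _).mul hg
  rw [Metric.tendsto_atTop]
  intro ε hε
  set ε' : ℝ := ε * m / 4 with hε'def
  have hε' : 0 < ε' := by positivity
  obtain ⟨R₀, hR₀⟩ := (Metric.tendsto_atTop.1 hlim) ε' hε'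
  set R : ℝ := max R₀ 1 with hRdef
  have hR1 : (1:ℝ) ≤ R := le_max_right _ _
  have hRpos : (0:ℝ) < R := lt_of_lt_of_le one_pos hR1
  have hgR : ∀ t : ℝ, R ≤ t → |g t - L| ≤ ε' := by
    intro t ht
    have := hR₀ t (le_trans (le_max_left _ _) ht)
    rw [Real.dist_eq] at this
    exact this.le
  set C : ℝ := |(∫ t in (0:ℝ)..R, t ^ (m - 1) * g t) - L * R ^ m / m| with hCdef
  have hC0 : 0 ≤ C := abs_nonneg _
  refine ⟨max R (2 * C / ε + 1), fun r hr => ?_⟩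
  have hrR : R ≤ r := le_trans (le_max_left _ _) hr
  have hr1 : (1:ℝ) ≤ r := le_trans hR1 hrR
  have hrpos : (0:ℝ) < r := lt_of_lt_of_le one_pos hr1
  have hrC : 2 * C / ε + 1 ≤ r := le_trans (le_max_right _ _) hr
  have hrm : (0:ℝ) < r ^ m := pow_pos hrpos m
  have hRrm : R ^ m ≤ r ^ m := pow_le_pow_left₀ hRpos.le hrR m
  have hrm_ge_r : r ≤ r ^ m := by
    calc r = r ^ 1 := (pow_one r).symm
    _ ≤ r ^ m := pow_le_pow_right₀ hr1 hm
  have hint1 : IntervalIntegrable (fun t : ℝ => t ^ (m - 1) * g t) volume 0 R :=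
    hfc.intervalIntegrable _ _
  have hint2 : IntervalIntegrable (fun t : ℝ => t ^ (m - 1) * g t) volume R r :=
    hfc.intervalIntegrable _ _
  have hsplit : (∫ t in (0:ℝ)..r, t ^ (m - 1) * g t) =
      (∫ t in (0:ℝ)..R, t ^ (m - 1) * g t) + ∫ t in R..r, t ^ (m - 1) * g t :=
    (intervalIntegral.integral_add_adjacent_intervals hint1 hint2).symm
  have hpowint : (∫ t in R..r, (t:ℝ) ^ (m - 1)) = (r ^ m - R ^ m) / m := by
    rw [integral_pow, Nat.sub_add_cancel hm]
    congr 1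
    push_cast [Nat.cast_sub hm]
    ring
  have htail : |(∫ t in R..r, t ^ (m - 1) * g t) - L * ((r ^ m - R ^ m) / m)| ≤
      ε' * ((r ^ m - R ^ m) / m) := by
    have heq : (∫ t in R..r, t ^ (m - 1) * g t) - L * ((r ^ m - R ^ m) / m) =
        ∫ t in R..r, t ^ (m - 1) * (g t - L) := by
      have h1 : (∫ t in R..r, t ^ (m - 1) * (g t - L)) =
          (∫ t in R..r, t ^ (m - 1) * g t) - (∫ t in R..r, (t:ℝ) ^ (m - 1)) * L := by
        rw [← intervalIntegral.integral_mul_const, ← intervalIntegral.integral_sub (g := fun t : ℝ => t ^ (m - 1) * L) hint2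
          (((continuous_pow (m-1)).mul continuous_const).intervalIntegrable _ _)]
        apply intervalIntegral.integral_congr
        intro t _
        ring
      rw [h1, hpowint]
      ring
    rw [heq]
    calc |∫ t in R..r, t ^ (m - 1) * (g t - L)| ≤ ∫ t in R..r, |t ^ (m - 1) * (g t - L)| :=
          intervalIntegral.abs_integral_le_integral_abs hrR
    _ ≤ ∫ t in R..r, t ^ (m - 1) * ε' := by
        apply intervalIntegral.integral_mono_on hrR
        · exact ((hfc.sub ((continuous_pow (m-1)).mul (continuous_const (y := L)))).abs.congr
            (fun t => by congr 1; simp only [Pi.sub_apply, Pi.mul_apply]; ring)).intervalIntegrable _ _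
        · exact ((continuous_pow (m-1)).mul continuous_const).intervalIntegrable _ _
        · intro t ht
          rw [abs_mul, abs_of_nonneg (pow_nonneg (le_trans hRpos.le ht.1) _)]
          exact mul_le_mul_of_nonneg_left (hgR t ht.1)
            (pow_nonneg (le_trans hRpos.le ht.1) _)
    _ = ε' * ((r ^ m - R ^ m) / m) := by
        rw [intervalIntegral.integral_mul_const, hpowint]; ring
  -- assemble
  rw [Real.dist_eq]
  have hdecomp : (∫ t in (0:ℝ)..r, t ^ (m - 1) * g t) / r ^ m - L / m =
      ((∫ t in (0:ℝ)..R, t ^ (m - 1) * g t) - L * R ^ m / m) / r ^ m +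
      ((∫ t in R..r, t ^ (m - 1) * g t) - L * ((r ^ m - R ^ m) / m)) / r ^ m := by
    rw [hsplit]
    field_simp
    ring
  rw [hdecomp]
  have hRm0 : (0:ℝ) ≤ R ^ m := (pow_pos hRpos m).le
  have habs : |((∫ t in (0:ℝ)..R, t ^ (m - 1) * g t) - L * R ^ m / m) / r ^ m +
      ((∫ t in R..r, t ^ (m - 1) * g t) - L * ((r ^ m - R ^ m) / m)) / r ^ m| ≤
      C / r ^ m + ε' * ((r ^ m - R ^ m) / m) / r ^ m := by
    refine le_trans (abs_add_le _ _) (add_le_add ?_ ?_)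
    · rw [abs_div, abs_of_pos hrm]
    · rw [abs_div, abs_of_pos hrm]
      gcongr
  have hterm2 : ε' * ((r ^ m - R ^ m) / m) / r ^ m ≤ ε / 4 := by
    have h2 : ε' * ((r ^ m - R ^ m) / m) / r ^ m ≤ ε' * (r ^ m / m) / r ^ m := by
      gcongr
      linarith
    calc ε' * ((r ^ m - R ^ m) / m) / r ^ m ≤ ε' * (r ^ m / m) / r ^ m := h2
    _ = ε / 4 := by
        rw [hε'def]
        field_simp
  have hterm1 : C / r ^ m ≤ C / r := by gcongr
  have hterm1b : C / r < ε / 2 := by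
    rw [div_lt_iff₀ hrpos]
    have h3 : 2 * C ≤ (r - 1) * ε := (div_le_iff₀ hε).1 (by linarith)
    nlinarith
  calc |_| ≤ C / r ^ m + ε' * ((r ^ m - R ^ m) / m) / r ^ m := habs
  _ < ε := by linarith


theorem stmt_18 (n : ℕ) (hn : 3 ≤ n) (α β : ℝ) (hαβ : 2 * β < α)
    (v : EuclideanSpace ℝ (Fin n) → ℝ) (hv : ContDiff ℝ 2 v)
    (hpde : ∀ x : EuclideanSpace ℝ (Fin n),
      lap v x + α * Real.exp (v x) +
        β * ⟪x, gradient (fun y => Real.exp (v y)) x⟫ = 0)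
    (φ : ℝ → ℝ) (hradial : ∀ x : EuclideanSpace ℝ (Fin n), v x = φ ‖x‖)
    (hlim : Tendsto (fun r : ℝ => r ^ 2 * Real.exp (φ r)) atTop
      (nhds (2 * ((n : ℝ) - 2) / (α - 2 * β)))) :
    Tendsto (fun r : ℝ => r * deriv φ r) atTop (nhds (-2)) := by
  have hn0 : 0 < n := by omega
  set i₀ : Fin n := ⟨0, hn0⟩ with hi₀def
  set Et : ℝ → ℝ := fun t => Real.exp (v (t • EuclideanSpace.single i₀ 1)) with hEtdef
  set L : ℝ := 2 * ((n : ℝ) - 2) / (α - 2 * β) with hLdef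
  have hnR : (3:ℝ) ≤ (n:ℝ) := by exact_mod_cast hn
  have hαβ' : α - 2 * β ≠ 0 := by linarith
  have hn2 : (0:ℝ) < (n:ℝ) - 2 := by linarith
  have hEtφ : ∀ t : ℝ, 0 ≤ t → Et t = Real.exp (φ t) := by
    intro t ht
    show Real.exp (v (t • EuclideanSpace.single i₀ 1)) = _
    rw [hradial, norm_ray i₀ t ht]
  have hEtc : Continuous Et := by
    apply Real.continuous_exp.comp
    exact hv.continuous.comp (continuous_id.smul continuous_const)
  have hlimE : Tendsto (fun r : ℝ => r ^ 2 * Et r) atTop (nhds L) := by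
    refine hlim.congr' ?_
    filter_upwards [eventually_ge_atTop (0:ℝ)] with r hr
    rw [hEtφ r hr]
  set m : ℕ := n - 2 with hmdef
  have hm : 1 ≤ m := by omega
  have hmcast : ((m:ℕ) : ℝ) = (n : ℝ) - 2 := by
    rw [hmdef]
    push_cast [Nat.cast_sub (by omega : 2 ≤ n)]
    ring
  have hces := cesaro_pow (fun t => t ^ 2 * Et t)
    ((continuous_pow 2).mul hEtc) m hm L hlimE
  have hint_eq : ∀ r : ℝ, (∫ t in (0:ℝ)..r, t ^ (m - 1) * (t ^ 2 * Et t)) =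
      ∫ t in (0:ℝ)..r, t ^ (n - 1) * Et t := by
    intro r
    apply intervalIntegral.integral_congr
    intro t _
    show t ^ (m - 1) * (t ^ 2 * Et t) = t ^ (n - 1) * Et t
    rw [← mul_assoc, ← pow_add]
    congr 2
    omega
  have heq : ∀ r : ℝ, 1 ≤ r → r * deriv φ r =
      ((n : ℝ) * β - α) * ((∫ t in (0:ℝ)..r, t ^ (m - 1) * (t ^ 2 * Et t)) / r ^ m)
        - β * (r ^ 2 * Et r) := by
    intro r hr1
    have hr : (0:ℝ) < r := lt_of_lt_of_le one_pos hr1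
    have hk := lemKey v φ i₀ α β hn hv hradial hpde hr
    rw [hint_eq r]
    have hrm : (0:ℝ) < r ^ m := pow_pos hr m
    have h1 : r ^ (n - 1) = r ^ m * r := by rw [← pow_succ]; congr 1; omega
    have h2 : r ^ n = r ^ m * r ^ 2 := by rw [← pow_add]; congr 1; omega
    rw [h1, h2] at hk
    rw [hEtφ r hr.le]
    field_simp
    linear_combination hk
  have hval : ((n : ℝ) * β - α) * (L / m) - β * L = -2 := by
    rw [hmcast, hLdef]
    have hk := mul_inv_cancel₀ hαβ'
    have hk2 := mul_inv_cancel₀ hn2.ne'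
    linear_combination (2 * ((n:ℝ) * β - α) * (α - 2 * β)⁻¹) * hk2 + (-2) * hk
  have hfin : Tendsto (fun r : ℝ =>
      ((n : ℝ) * β - α) * ((∫ t in (0:ℝ)..r, t ^ (m - 1) * (t ^ 2 * Et t)) / r ^ m)
        - β * (r ^ 2 * Et r)) atTop (nhds (-2)) := by
    rw [← hval]
    exact (tendsto_const_nhds.mul hces).sub (tendsto_const_nhds.mul hlimE)
  refine hfin.congr' ?_
  filter_upwards [eventually_ge_atTop (1:ℝ)] with r hr
  exact (heq r hr).symm
end
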